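/- Let Ã be a real m×k matrix with ÃᵀÃ invertible, let B̃ = (ÃᵀÃ)⁻¹, let y ∈ ℝᵐ, and let x̂ = B̃Ãᵀy. Then for each index i ∈ {1,…,k}, the increase in squared residual caused by deleting the i-th column satisfies ‖R_{Ã∖i} y‖² − ‖R_Ã y‖² = x̂(i)² / B̃(i,i), where Ã∖i is Ã with its i-th column deleted (whose Gram matrix is invertible) and B̃(i,i) > 0. Consequently, the column whose removal increases the residual least is the one minimizing x̂(i)²/B̃(i,i) over i. -/

import Mathlib

open Matrix

noncomputable section

/-- `P_A = A (AᵀA)⁻¹ Aᵀ`, the orthogonal projection onto the column span of `A`. -/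
def proj {m : ℕ} {ι : Type} [Fintype ι] [DecidableEq ι]
    (A : Matrix (Fin m) ι ℝ) : Matrix (Fin m) (Fin m) ℝ :=
  A * (Aᵀ * A)⁻¹ * Aᵀ

/-- `R_A = I − P_A`. -/
def resid {m : ℕ} {ι : Type} [Fintype ι] [DecidableEq ι]
    (A : Matrix (Fin m) ι ℝ) : Matrix (Fin m) (Fin m) ℝ :=
  1 - proj A

/-- `A` with its `i`-th column deleted. -/
def delCol {m k : ℕ} (A : Matrix (Fin m) (Fin k) ℝ) (i : Fin k) :
    Matrix (Fin m) {j : Fin k // j ≠ i} ℝ :=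
  A.submatrix id fun j => (j : Fin k)


lemma proj_symm {m : ℕ} {ι : Type} [Fintype ι] [DecidableEq ι]
    (A : Matrix (Fin m) ι ℝ) : (proj A)ᵀ = proj A := by
  simp [proj, transpose_mul, transpose_nonsing_inv, Matrix.mul_assoc]

lemma proj_idem {m : ℕ} {ι : Type} [Fintype ι] [DecidableEq ι]
    (A : Matrix (Fin m) ι ℝ) (h : IsUnit (Aᵀ * A)) : proj A * proj A = proj A := by
  have hd : IsUnit (Aᵀ * A).det := (isUnit_iff_isUnit_det _).mp h
  have : (Aᵀ * A)⁻¹ * (Aᵀ * A) = 1 := nonsing_inv_mul _ hd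
  calc A * (Aᵀ * A)⁻¹ * Aᵀ * (A * (Aᵀ * A)⁻¹ * Aᵀ)
      = A * (((Aᵀ * A)⁻¹ * (Aᵀ * A)) * (Aᵀ * A)⁻¹) * Aᵀ := by
        simp only [Matrix.mul_assoc]
    _ = A * (Aᵀ * A)⁻¹ * Aᵀ := by rw [this]; simp [Matrix.mul_assoc]

lemma resid_norm {m : ℕ} {ι : Type} [Fintype ι] [DecidableEq ι]
    (A : Matrix (Fin m) ι ℝ) (h : IsUnit (Aᵀ * A)) (y : Fin m → ℝ) :
    (resid A *ᵥ y) ⬝ᵥ (resid A *ᵥ y) = y ⬝ᵥ y - y ⬝ᵥ (proj A *ᵥ y) := by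
  have hRR : (resid A)ᵀ * resid A = resid A := by
    have hs : (resid A)ᵀ = resid A := by
      simp [resid, transpose_sub, proj_symm]
    rw [hs]
    simp [resid, Matrix.sub_mul, Matrix.mul_sub, proj_idem A h]
  calc (resid A *ᵥ y) ⬝ᵥ (resid A *ᵥ y)
      = y ⬝ᵥ (((resid A)ᵀ * resid A) *ᵥ y) := by
        rw [← mulVec_mulVec, dotProduct_mulVec y, vecMul_transpose]
    _ = y ⬝ᵥ y - y ⬝ᵥ (proj A *ᵥ y) := by
        rw [hRR]
        simp [resid, Matrix.sub_mulVec, dotProduct_sub]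

lemma sum_ne {k : ℕ} (i : Fin k) (f : Fin k → ℝ) :
    ∑ s : {j : Fin k // j ≠ i}, f ↑s = (∑ s, f s) - f i := by
  have h1 : ∑ x ∈ Finset.univ.erase i, f x = ∑ s : {j : Fin k // j ≠ i}, f ↑s :=
    Finset.sum_subtype (Finset.univ.erase i)
      (fun x => by simp [Finset.mem_erase]) f
  have h2 := Finset.sum_erase_add Finset.univ f (Finset.mem_univ i)
  rw [← h1]; linarith

/-- Core per-index lemma. -/
lemma key {m k : ℕ} (At : Matrix (Fin m) (Fin k) ℝ) (h : IsUnit (Atᵀ * At))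
    (y : Fin m → ℝ) (i : Fin k) :
    IsUnit ((delCol At i)ᵀ * delCol At i) ∧
    0 < (Atᵀ * At)⁻¹ i i ∧
    (resid (delCol At i) *ᵥ y) ⬝ᵥ (resid (delCol At i) *ᵥ y) -
        (resid At *ᵥ y) ⬝ᵥ (resid At *ᵥ y) =
      ((Atᵀ * At)⁻¹ *ᵥ (Atᵀ *ᵥ y)) i ^ 2 / (Atᵀ * At)⁻¹ i i := by
  set G : Matrix (Fin k) (Fin k) ℝ := Atᵀ * At with hG
  set B : Matrix (Fin k) (Fin k) ℝ := G⁻¹ with hB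
  have hd : IsUnit G.det := (isUnit_iff_isUnit_det _).mp h
  have hBG : B * G = 1 := nonsing_inv_mul _ hd
  have hGB : G * B = 1 := mul_nonsing_inv _ hd
  have hGsym : Gᵀ = G := by rw [hG, transpose_mul, transpose_transpose]
  have hBsym : ∀ s t, B s t = B t s := by
    intro s t
    have : Bᵀ = B := by rw [hB, transpose_nonsing_inv, hGsym]
    exact (congrFun (congrFun this t) s).symm ▸ rfl
  have hGapp : ∀ s t, G s t = ∑ a, At a s * At a t := by
    intro s t; simp [hG, mul_apply, transpose_apply]
  have hBGapp : ∀ s t, ∑ r, B s r * G r t = if s = t then 1 else 0 := by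
    intro s t
    have := congrFun (congrFun hBG s) t
    simpa [mul_apply, one_apply] using this
  have hGBapp : ∀ s t, ∑ r, G s r * B r t = if s = t then 1 else 0 := by
    intro s t
    have := congrFun (congrFun hGB s) t
    simpa [mul_apply, one_apply] using this
  -- the vector u = A B e_i
  set u : Fin m → ℝ := fun a => ∑ s, At a s * B s i with hu
  have hAu : ∀ t, (∑ a, At a t * u a) = if t = i then 1 else 0 := by
    intro t
    calc ∑ a, At a t * u a = ∑ a, ∑ s, At a t * (At a s * B s i) := by
          simp [hu, Finset.mul_sum]
      _ = ∑ s, (∑ a, At a t * At a s) * B s i := by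
          rw [Finset.sum_comm]
          simp [Finset.sum_mul, mul_assoc]
      _ = ∑ s, G t s * B s i := by simp [hGapp]
      _ = if t = i then 1 else 0 := hGBapp t i
  have huu : u ⬝ᵥ u = B i i := by
    calc u ⬝ᵥ u = ∑ a, u a * u a := rfl
      _ = ∑ a, (∑ s, At a s * B s i) * u a := by simp [hu]
      _ = ∑ s, B s i * (∑ a, At a s * u a) := by
          simp_rw [Finset.sum_mul]
          rw [Finset.sum_comm]
          simp_rw [Finset.mul_sum]
          apply Finset.sum_congr rfl; intro s _
          apply Finset.sum_congr rfl; intro a _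
          ring
      _ = ∑ s, B s i * (if s = i then 1 else 0) := by simp [hAu]
      _ = B i i := by simp
  have hBii : 0 < B i i := by
    rw [← huu]
    have hnn : (0:ℝ) ≤ u ⬝ᵥ u := Finset.sum_nonneg fun a _ => mul_self_nonneg _
    have hne : u ≠ 0 := by
      intro h0
      have h1 := hAu i
      simp [h0] at h1
    have hz : u ⬝ᵥ u ≠ 0 := fun hz => hne (dotProduct_self_eq_zero.mp hz)
    exact lt_of_le_of_ne hnn (Ne.symm hz)
  have hBii' : B i i ≠ 0 := ne_of_gt hBii
  set A' := delCol At i with hA'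
  have hG'app : ∀ s t : {j : Fin k // j ≠ i}, ((A')ᵀ * A') s t = G ↑s ↑t := by
    intro s t
    simp [hA', delCol, mul_apply, transpose_apply, hGapp, submatrix_apply]
  set Ct : Fin k → Fin k → ℝ := fun s t => B s t - B s i * B i t / B i i with hCt
  have hCti : ∀ t, Ct i t = 0 := by
    intro t; simp only [hCt]; field_simp; ring
  have hCti' : ∀ s, Ct s i = 0 := by
    intro s; simp only [hCt]; field_simp; ring
  set C : Matrix {j : Fin k // j ≠ i} {j : Fin k // j ≠ i} ℝ :=
    Matrix.of fun s t => Ct ↑s ↑t with hC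
  have hG'C : ((A')ᵀ * A') * C = 1 := by
    ext s t
    rw [mul_apply]
    have e1 : ∀ r : {j : Fin k // j ≠ i},
        ((A')ᵀ * A') s r * C r t = G ↑s ↑r * Ct ↑r ↑t := fun r => by
      rw [hG'app]; rfl
    rw [Finset.sum_congr rfl fun r _ => e1 r,
      sum_ne i (fun r => G ↑s r * Ct r ↑t), hCti ↑t, mul_zero, sub_zero]
    have expand : ∑ r, G (↑s) r * Ct r ↑t
        = (∑ r, G ↑s r * B r ↑t) - (∑ r, G ↑s r * B r i) * (B i ↑t / B i i) := by
      simp only [hCt, mul_sub]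
      rw [Finset.sum_sub_distrib, Finset.sum_mul]
      congr 1
      apply Finset.sum_congr rfl; intro r _; ring
    rw [expand, hGBapp, hGBapp]
    have hsi : (↑s : Fin k) ≠ i := s.2
    have : (if (↑s : Fin k) = i then (1:ℝ) else 0) = 0 := by simp [hsi]
    rw [this, zero_mul, sub_zero, one_apply]
    by_cases hst : s = t
    · simp [hst]
    · have : (↑s : Fin k) ≠ ↑t := fun hh => hst (Subtype.ext hh)
      simp [hst, this]
  have hinv : Invertible ((A')ᵀ * A') := invertibleOfRightInverse _ _ hG'C
  have hUnit' : IsUnit ((A')ᵀ * A') := isUnit_of_invertible _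
  have hCinv : ((A')ᵀ * A')⁻¹ = C := inv_eq_right_inv hG'C
  refine ⟨hUnit', hBii, ?_⟩
  rw [resid_norm At h y, resid_norm A' hUnit' y]
  -- quadratic forms
  set v : Fin k → ℝ := fun t => ∑ a, At a t * y a with hv
  set q : Fin k → ℝ := fun s => ∑ t, B s t * v t with hq
  have hxhat : (B *ᵥ (Atᵀ *ᵥ y)) i = q i := by
    simp [mulVec, dotProduct, hq, hv, transpose_apply]
  have hP : y ⬝ᵥ (proj At *ᵥ y) = ∑ s, v s * q s := by
    have h1 : proj At *ᵥ y = At *ᵥ (B *ᵥ (Atᵀ *ᵥ y)) := by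
      rw [proj, ← mulVec_mulVec, ← mulVec_mulVec]
    rw [h1, dotProduct_mulVec y At, ← mulVec_transpose]
    simp [dotProduct, mulVec, hq, hv, transpose_apply]
  have hP' : y ⬝ᵥ (proj A' *ᵥ y) = (∑ s, v s * q s) - q i ^ 2 / B i i := by
    have h1 : proj A' *ᵥ y = A' *ᵥ (C *ᵥ ((A')ᵀ *ᵥ y)) := by
      rw [proj, hCinv, ← mulVec_mulVec, ← mulVec_mulVec]
    rw [h1, dotProduct_mulVec y A', ← mulVec_transpose]
    have hw : ∀ s : {j : Fin k // j ≠ i}, ((A')ᵀ *ᵥ y) s = v ↑s := by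
      intro s; simp [hA', delCol, mulVec, dotProduct, transpose_apply, hv, submatrix_apply]
    have hgfull : ∀ s, (∑ t, Ct s t * v t) = q s - B s i * (q i / B i i) := by
      intro s
      simp only [hCt, sub_mul]
      rw [Finset.sum_sub_distrib]
      congr 1
      have hqi : q i = ∑ t, B i t * v t := rfl
      rw [hqi, Finset.sum_div, Finset.mul_sum]
      apply Finset.sum_congr rfl; intro t _; ring
    calc ((A')ᵀ *ᵥ y) ⬝ᵥ (C *ᵥ ((A')ᵀ *ᵥ y))
        = ∑ s : {j : Fin k // j ≠ i}, v ↑s * (∑ t : {j : Fin k // j ≠ i}, Ct ↑s ↑t * v ↑t) := by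
          have hwf : ((A')ᵀ *ᵥ y) = fun s : {j : Fin k // j ≠ i} => v ↑s := funext hw
          rw [hwf]
          simp only [dotProduct, mulVec, hC, Matrix.of_apply]
      _ = ∑ s : {j : Fin k // j ≠ i}, v ↑s * (∑ t, Ct ↑s t * v t) := by
          apply Finset.sum_congr rfl; intro s _
          rw [sum_ne i (fun t => Ct ↑s t * v t), hCti' ↑s, zero_mul, sub_zero]
      _ = ∑ s, v s * (∑ t, Ct s t * v t) := by
          rw [sum_ne i (fun s => v s * (∑ t, Ct s t * v t))]
          have : (∑ t, Ct i t * v t) = 0 := by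
            apply Finset.sum_eq_zero; intro t _; rw [hCti t, zero_mul]
          rw [this, mul_zero, sub_zero]
      _ = (∑ s, v s * q s) - q i ^ 2 / B i i := by
          have : ∀ s, v s * (∑ t, Ct s t * v t) = v s * q s - (v s * B s i) * (q i / B i i) := by
            intro s; rw [hgfull s]; ring
          rw [Finset.sum_congr rfl fun s _ => this s, Finset.sum_sub_distrib]
          congr 1
          rw [← Finset.sum_mul]
          have hsum : (∑ s, v s * B s i) = q i := by
            rw [hq]
            apply Finset.sum_congr rfl; intro s _
            rw [hBsym s i]; ring
          rw [hsum]; ring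
  rw [hP, hP', hxhat]
  ring

/-- The increase in squared residual caused by deleting a column, and the
corresponding least-contributing column criterion. -/
theorem stmt4 {m k : ℕ} (At : Matrix (Fin m) (Fin k) ℝ) (h : IsUnit (Atᵀ * At))
    (Bt : Matrix (Fin k) (Fin k) ℝ) (hBt : Bt = (Atᵀ * At)⁻¹)
    (y : Fin m → ℝ) (xhat : Fin k → ℝ) (hx : xhat = Bt *ᵥ (Atᵀ *ᵥ y)) :
    (∀ i : Fin k,
        IsUnit ((delCol At i)ᵀ * delCol At i) ∧
        0 < Bt i i ∧
        (resid (delCol At i) *ᵥ y) ⬝ᵥ (resid (delCol At i) *ᵥ y) -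
            (resid At *ᵥ y) ⬝ᵥ (resid At *ᵥ y) =
          xhat i ^ 2 / Bt i i) ∧
      (∀ i j : Fin k,
        xhat i ^ 2 / Bt i i ≤ xhat j ^ 2 / Bt j j →
          (resid (delCol At i) *ᵥ y) ⬝ᵥ (resid (delCol At i) *ᵥ y) ≤
            (resid (delCol At j) *ᵥ y) ⬝ᵥ (resid (delCol At j) *ᵥ y)) := by
  subst hx hBt
  constructor
  · intro i; exact key At h y i
  · intro i j hij
    obtain ⟨_, _, hi⟩ := key At h y i
    obtain ⟨_, _, hj⟩ := key At h y j
    linarith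


end
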